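/- If d is a graphical sequence with d_i > 0, then d has a realization as a simple graph in which vertex i is adjacent to d_i of the highest-degree vertices other than i. -/

import Mathlib

open Finset

section Swap

variable {V : Type*} [Fintype V] [DecidableEq V]

open Classical in
noncomputable def nbr (G : SimpleGraph V) (v : V) : Finset V :=
  Finset.univ.filter (G.Adj v)

open Classical in
lemma mem_nbr {G : SimpleGraph V} {v w : V} : w ∈ nbr G v ↔ G.Adj v w := by
  simp [nbr]

lemma natcard_eq_nbr_card (G : SimpleGraph V) (v : V) :
    Nat.card {k // G.Adj v k} = (nbr G v).card := by
  classical
  rw [Nat.card_congr (Equiv.subtypeEquivRight (fun k => (mem_nbr (G := G)).symm))]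
  exact Nat.card_eq_finsetCard _

def pairEq (x y u v : V) : Prop := (x = u ∧ y = v) ∨ (x = v ∧ y = u)

lemma pairEq_comm {x y u v : V} : pairEq x y u v ↔ pairEq y x u v := by
  unfold pairEq; tauto

def swap (G : SimpleGraph V) (a b c e : V) (hac : a ≠ c) (hbe : b ≠ e) :
    SimpleGraph V where
  Adj x y := (G.Adj x y ∧ ¬ pairEq x y a b ∧ ¬ pairEq x y c e) ∨
      pairEq x y a c ∨ pairEq x y b e
  symm := by
    constructor
    intro x y h
    rcases h with ⟨h, h1, h2⟩ | h | h
    · exact Or.inl ⟨h.symm, fun hp => h1 (pairEq_comm.mp hp), fun hp => h2 (pairEq_comm.mp hp)⟩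
    · exact Or.inr (Or.inl (pairEq_comm.mp h))
    · exact Or.inr (Or.inr (pairEq_comm.mp h))
  loopless := by
    constructor
    intro x h
    rcases h with ⟨h, -⟩ | (⟨h1, h2⟩ | ⟨h1, h2⟩) | (⟨h1, h2⟩ | ⟨h1, h2⟩)
    · exact G.loopless.irrefl x h
    · exact hac (h1.symm.trans h2)
    · exact hac (h2.symm.trans h1)
    · exact hbe (h1.symm.trans h2)
    · exact hbe (h2.symm.trans h1)

lemma swap_adj {G : SimpleGraph V} {a b c e : V} {hac : a ≠ c} {hbe : b ≠ e} {x y : V} :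
    (swap G a b c e hac hbe).Adj x y ↔
      (G.Adj x y ∧ ¬ pairEq x y a b ∧ ¬ pairEq x y c e) ∨
      pairEq x y a c ∨ pairEq x y b e := Iff.rfl

variable {G : SimpleGraph V} {a b c e : V}
  (hab : G.Adj a b) (hce : G.Adj c e) (hac' : ¬ G.Adj a c) (hbe' : ¬ G.Adj b e)
  (hac : a ≠ c) (hbe : b ≠ e)

include hab hce hac' hbe' hac hbe

lemma nbr_swap_a : nbr (swap G a b c e hac hbe) a = insert c ((nbr G a).erase b) := by
  have hab' : a ≠ b := hab.ne
  have hce' : c ≠ e := hce.ne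
  have hbc : b ≠ c := fun h => hac' (h ▸ hab)
  have hae : a ≠ e := fun h => hac' ((h ▸ hce).symm)
  ext w
  simp only [mem_nbr, swap_adj, pairEq, mem_insert, mem_erase, true_and]
  constructor
  · rintro (⟨h, h1, h2⟩ | (⟨-, rfl⟩ | ⟨h1, h2⟩) | (⟨h1, h2⟩ | ⟨h1, h2⟩)) <;> tauto
  · rintro (rfl | ⟨h1, h2⟩)
    · tauto
    · exact Or.inl ⟨h2, by tauto, by rintro (⟨r1, r2⟩ | ⟨r1, r2⟩) <;> tauto⟩


set_option maxHeartbeats 1000000 in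
lemma swap_comm : swap G a b c e hac hbe = swap G c e a b hac.symm hbe.symm := by
  ext x y
  simp only [swap_adj, pairEq]
  tauto

omit hab hce hac' hbe' in
set_option maxHeartbeats 1000000 in
lemma swap_flip : swap G a b c e hac hbe = swap G b a e c hbe hac := by
  ext x y
  simp only [swap_adj, pairEq]
  tauto

lemma nbr_swap_b : nbr (swap G a b c e hac hbe) b = insert e ((nbr G b).erase a) := by
  rw [swap_flip hac hbe]
  exact nbr_swap_a hab.symm hce.symm hbe' hac' hbe hac

lemma nbr_swap_c : nbr (swap G a b c e hac hbe) c = insert a ((nbr G c).erase e) := by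
  rw [swap_comm hab hce hac' hbe' hac hbe]
  exact nbr_swap_a hce hab (fun h => hac' h.symm) (fun h => hbe' h.symm) hac.symm hbe.symm

lemma nbr_swap_e : nbr (swap G a b c e hac hbe) e = insert b ((nbr G e).erase c) := by
  rw [swap_comm hab hce hac' hbe' hac hbe, swap_flip hac.symm hbe.symm]
  exact nbr_swap_a hce.symm hab.symm (fun h => hbe' h.symm) (fun h => hac' h.symm)
    hbe.symm hac.symm

omit hab hce hac' hbe' in
lemma nbr_swap_other {v : V} (hva : v ≠ a) (hvb : v ≠ b) (hvc : v ≠ c) (hve : v ≠ e) :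
    nbr (swap G a b c e hac hbe) v = nbr G v := by
  ext w
  simp only [mem_nbr, swap_adj, pairEq]
  constructor
  · rintro (⟨h, -, -⟩ | (⟨h1, -⟩ | ⟨h1, -⟩) | (⟨h1, -⟩ | ⟨h1, -⟩)) <;> first
      | exact h
      | exact absurd h1 (by assumption)
  · intro h
    exact Or.inl ⟨h, by rintro (⟨r1, -⟩ | ⟨r1, -⟩) <;> tauto,
      by rintro (⟨r1, -⟩ | ⟨r1, -⟩) <;> tauto⟩

lemma card_nbr_swap (v : V) :
    (nbr (swap G a b c e hac hbe) v).card = (nbr G v).card := by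
  have hab' : a ≠ b := hab.ne
  have hce' : c ≠ e := hce.ne
  have hbc : b ≠ c := fun h => hac' (h ▸ hab)
  have hae : a ≠ e := fun h => hac' ((h ▸ hce).symm)
  have key : ∀ (u x y : V), G.Adj u x → ¬ G.Adj u y → x ≠ y →
      (insert y ((nbr G u).erase x)).card = (nbr G u).card := by
    intro u x y hux huy hxy
    have hx : x ∈ nbr G u := mem_nbr.mpr hux
    have hy : y ∉ (nbr G u).erase x := fun h => huy (mem_nbr.mp (Finset.mem_of_mem_erase h))
    rw [Finset.card_insert_of_notMem hy, Finset.card_erase_add_one hx]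
  by_cases hva : v = a
  · subst hva; rw [nbr_swap_a hab hce hac' hbe' hac hbe]
    exact key v b c hab hac' (fun h => hac' (h ▸ hab))
  by_cases hvb : v = b
  · subst hvb; rw [nbr_swap_b hab hce hac' hbe' hac hbe]
    exact key v a e hab.symm hbe' hae
  by_cases hvc : v = c
  · subst hvc; rw [nbr_swap_c hab hce hac' hbe' hac hbe]
    exact key v e a hce (fun h => hac' h.symm) (fun h => hae h.symm)
  by_cases hve : v = e
  · subst hve; rw [nbr_swap_e hab hce hac' hbe' hac hbe]
    exact key v c b hce.symm (fun h => hbe' h.symm) (fun h => hbc h.symm)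
  · rw [nbr_swap_other hac hbe hva hvb hvc hve]

end Swap

/-- A degree sequence `d` on `N` vertices is graphical if it is realized as the
degree sequence of some simple undirected graph on `N` vertices. -/
def Graphical {N : ℕ} (d : Fin N → ℕ) : Prop :=
  ∃ G : SimpleGraph (Fin N), ∀ i, Nat.card {j // G.Adj i j} = d i

/-- If `d` is graphical with `d i > 0`, then `d` has a realization in which vertex `i`
is adjacent to a set `S` of `d i` highest-degree vertices other than `i` (i.e., every
vertex of `S` has degree at least that of any vertex outside `S` other than `i`). -/
theorem graphical_realization_highest_degree {N : ℕ} (d : Fin N → ℕ)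
    (hd : Graphical d) (i : Fin N) (hi : 0 < d i) :
    ∃ (G : SimpleGraph (Fin N)) (S : Finset (Fin N)),
      (∀ j, Nat.card {k // G.Adj j k} = d j) ∧
      i ∉ S ∧ S.card = d i ∧
      (∀ j ∈ S, G.Adj i j) ∧ (∀ j, G.Adj i j → j ∈ S) ∧
      (∀ j ∈ S, ∀ k, k ∉ S → k ≠ i → d k ≤ d j) := by
  classical
  obtain ⟨G0, hG0⟩ := hd
  set B := ∑ w : Fin N, d w with hB
  set P : ℕ → Prop := fun n => ∃ G : SimpleGraph (Fin N),
    (∀ j, (nbr G j).card = d j) ∧ (∑ w ∈ (nbr G i), d w) = n with hP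
  have hreal0 : ∀ j, (nbr G0 j).card = d j := fun j => by
    rw [← natcard_eq_nbr_card]; exact hG0 j
  have hle : ∀ G : SimpleGraph (Fin N), (∑ w ∈ (nbr G i), d w) ≤ B :=
    fun G => Finset.sum_le_sum_of_subset (Finset.subset_univ _)
  have hP0 : P (∑ w ∈ (nbr G0 i), d w) := ⟨G0, hreal0, rfl⟩
  obtain ⟨G, hGdeg, hGsum⟩ := Nat.findGreatest_spec (hle G0) hP0
  refine ⟨G, nbr G i, ?_, ?_, ?_, ?_, ?_, ?_⟩
  · intro j; rw [natcard_eq_nbr_card]; exact hGdeg j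
  · exact fun h => G.loopless.irrefl i (mem_nbr.mp h)
  · exact hGdeg i
  · intro j hj; exact mem_nbr.mp hj
  · intro j hj; exact mem_nbr.mpr hj
  · intro j hjS k hkS hki
    by_contra hdlt
    push_neg at hdlt
    have hij : G.Adj i j := mem_nbr.mp hjS
    have hik : ¬ G.Adj i k := fun h => hkS (mem_nbr.mpr h)
    have hex : ∃ l, G.Adj k l ∧ ¬ G.Adj j l ∧ l ≠ j := by
      by_contra hl
      push_neg at hl
      have hsub : (nbr G k).erase j ⊆ (nbr G j).erase i := by
        intro l hlmem
        obtain ⟨hlj, hlk⟩ := Finset.mem_erase.mp hlmem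
        have hkl : G.Adj k l := mem_nbr.mp hlk
        have hjl : G.Adj j l := by
          by_contra hno
          exact hlj (hl l hkl hno)
        refine Finset.mem_erase.mpr ⟨?_, mem_nbr.mpr hjl⟩
        rintro rfl
        exact hik hkl.symm
      have h1 : i ∈ nbr G j := mem_nbr.mpr hij.symm
      have h2 := Finset.card_le_card hsub
      rw [Finset.card_erase_of_mem h1] at h2
      have h3 : (nbr G k).card - 1 ≤ ((nbr G k).erase j).card :=
        Finset.pred_card_le_card_erase
      have h4 : 1 ≤ (nbr G j).card := Finset.card_pos.mpr ⟨i, h1⟩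
      rw [hGdeg j] at h2 h4
      rw [hGdeg k] at h3
      omega
    obtain ⟨l, hkl, hjl, hlj⟩ := hex
    have hik2 : i ≠ k := hki.symm
    have hjl2 : j ≠ l := hlj.symm
    set G' := swap G i j k l hik2 hjl2 with hG'
    have hdeg' : ∀ v, (nbr G' v).card = d v := fun v => by
      rw [hG', card_nbr_swap hij hkl hik hjl hik2 hjl2 v]; exact hGdeg v
    have hni : nbr G' i = insert k ((nbr G i).erase j) :=
      nbr_swap_a hij hkl hik hjl hik2 hjl2
    have hkerase : k ∉ (nbr G i).erase j :=
      fun h => hkS (Finset.mem_of_mem_erase h)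
    have hsum' : ∑ w ∈ (nbr G' i), d w = d k + ∑ w ∈ ((nbr G i).erase j), d w := by
      rw [hni, Finset.sum_insert hkerase]
    have hsumold : d j + ∑ w ∈ ((nbr G i).erase j), d w = ∑ w ∈ (nbr G i), d w :=
      Finset.add_sum_erase _ _ hjS
    have hPnew : P (∑ w ∈ (nbr G' i), d w) := ⟨G', hdeg', rfl⟩
    have hge := Nat.le_findGreatest (P := P) (hle G') hPnew
    omega
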